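/- Let {H_n} be a Positive Linear Recurrence Sequence with length L and size S, and suppose E[K_r] = a·r + b + f(r) for all r > L, where a, b are constants. For n > 2L and 0 ≤ t < S, the conditional expectation satisfies E[K_n | Z_n = t] = a(n − ℓ(t)) + b + f(n − ℓ(t)) + t. -/

import Mathlib

open scoped BigOperators
open Filter

/-- A Positive Linear Recurrence Sequence (PLRS): a sequence `H` of positive integers
satisfying `H (n+1) = c 1 * H n + ⋯ + c L * H (n+1-L)` for `n ≥ L`, with
`H 1 = 1` and initial conditions `H (n+1) = c 1 * H n + ⋯ + c n * H 1 + 1` for `1 ≤ n < L`. -/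
structure PLRS where
  /-- the length of the recurrence -/
  L : ℕ
  /-- the coefficients of the recurrence (indexed from 1) -/
  c : ℕ → ℕ
  /-- the sequence itself (indexed from 1) -/
  H : ℕ → ℕ
  L_pos : 0 < L
  c1_pos : 0 < c 1
  cL_pos : 0 < c L
  H_pos : ∀ n, 1 ≤ n → 0 < H n
  H_one : H 1 = 1
  H_rec : ∀ n, L ≤ n → H (n + 1) = ∑ i ∈ Finset.Icc 1 L, c i * H (n + 1 - i)
  H_init : ∀ n, 1 ≤ n → n < L → H (n + 1) = (∑ i ∈ Finset.Icc 1 n, c i * H (n + 1 - i)) + 1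

namespace PLRS

/-- The size `S = c 1 + ⋯ + c L` of a PLRS. -/
def size (P : PLRS) : ℕ := ∑ i ∈ Finset.Icc 1 P.L, P.c i

/-- Legality of a coefficient sequence `(a_1, …, a_m)` (as a list), not including the
requirement `a_1 > 0`: either (Condition 1) `m < L` and `a_i = c_i` for all `i`, or
(Condition 2) there is `s ∈ {1, …, L}` with `a_1 = c_1, …, a_{s-1} = c_{s-1}`, `a_s < c_s`,
and `(a_{s+1}, …, a_m)` legal (possibly empty). -/
inductive IsLegal (P : PLRS) : List ℕ → Prop
  | cond1 (m : ℕ) (h1 : 1 ≤ m) (h2 : m < P.L) :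
      IsLegal P ((List.range m).map fun i => P.c (i + 1))
  | cond2 (s : ℕ) (hs1 : 1 ≤ s) (hs2 : s ≤ P.L) (a : ℕ) (ha : a < P.c s)
      (rest : List ℕ) (hrest : IsLegal P rest) :
      IsLegal P (((List.range (s - 1)).map fun i => P.c (i + 1)) ++ a :: rest)
  | cond2_last (s : ℕ) (hs1 : 1 ≤ s) (hs2 : s ≤ P.L) (a : ℕ) (ha : a < P.c s) :
      IsLegal P (((List.range (s - 1)).map fun i => P.c (i + 1)) ++ [a])

/-- A legal decomposition: a legal coefficient sequence with `a_1 > 0`. -/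
def LegalDecomp (P : PLRS) (l : List ℕ) : Prop := P.IsLegal l ∧ 0 < l.headI

/-- The value `∑_{i=1}^m a_i H_{m+1-i}` of a coefficient sequence `(a_1, …, a_m)`. -/
def value (P : PLRS) (l : List ℕ) : ℕ :=
  ∑ i ∈ Finset.range l.length, l.getD i 0 * P.H (l.length - i)

/-- `Ω_n`: the set of legal decompositions of integers in `[H_n, H_{n+1})`. -/
def Omega (P : PLRS) (n : ℕ) : Set (List ℕ) :=
  {l | P.LegalDecomp l ∧ P.H n ≤ P.value l ∧ P.value l < P.H (n + 1)}

/-- Expectation of `g` under the uniform probability measure on a (finite) set `A`. -/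
noncomputable def expectOn (A : Set (List ℕ)) (g : List ℕ → ℝ) : ℝ :=
  (∑ᶠ l ∈ A, g l) / (A.ncard : ℝ)

/-- Variance of `g` under the uniform probability measure on a (finite) set `A`. -/
noncomputable def varOn (A : Set (List ℕ)) (g : List ℕ → ℝ) : ℝ :=
  expectOn A (fun l => g l ^ 2) - (expectOn A g) ^ 2

/-- Expectation of `g` under the uniform probability measure on `Ω_n`. -/
noncomputable def expect (P : PLRS) (n : ℕ) (g : List ℕ → ℝ) : ℝ := expectOn (P.Omega n) g

/-- Probability of the event `A` under the uniform probability measure on `Ω_n`. -/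
noncomputable def prob (P : PLRS) (n : ℕ) (A : Set (List ℕ)) : ℝ :=
  ((P.Omega n ∩ A).ncard : ℝ) / ((P.Omega n).ncard : ℝ)

/-- `E[K_n]`, the expected number of summands on `Ω_n`. -/
noncomputable def expectK (P : PLRS) (n : ℕ) : ℝ := P.expect n fun l => (l.sum : ℝ)

/-- `Var[K_n]`, the variance of the number of summands on `Ω_n`. -/
noncomputable def varK (P : PLRS) (n : ℕ) : ℝ := varOn (P.Omega n) fun l => (l.sum : ℝ)

/-- The first index (0-based) at which the coefficient list disagrees with `c`. -/
def firstMismatch (P : PLRS) (l : List ℕ) : Option ℕ :=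
  (List.range l.length).find? fun i => l.getD i 0 != P.c (i + 1)

/-- The block decomposition of a legal coefficient sequence: repeatedly split off the
Type 2 block `(c_1, …, c_{s-1}, a_s)` with `a_s ≠ c_s`; if the whole remaining sequence
agrees with `c` it is a single (Type 1) block. -/
def blocks (P : PLRS) (l : List ℕ) : List (List ℕ) :=
  if h : l = [] then []
  else
    match P.firstMismatch l with
    | none => [l]
    | some i => l.take (i + 1) :: P.blocks (l.drop (i + 1))
termination_by l.length
decreasing_by
  have hl : 0 < l.length := List.length_pos_iff.mpr h
  simp only [List.length_drop]
  omega

/-- The second-to-last block of a legal decomposition. -/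
def stlBlock (P : PLRS) (l : List ℕ) : List ℕ := ((P.blocks l).reverse).getD 1 []

/-- `Z_n(ω)`: the size (sum of coefficients) of the second-to-last block. -/
def Z (P : PLRS) (l : List ℕ) : ℕ := (P.stlBlock l).sum

/-- The length function `ℓ(t)`: the length of the Type 2 block of size `t`, i.e., the least
`s` with `t < c_1 + ⋯ + c_s`. -/
noncomputable def ell (P : PLRS) (t : ℕ) : ℕ :=
  sInf {s : ℕ | t < ∑ i ∈ Finset.Icc 1 s, P.c i}

/-- `L_n(ω) = ℓ(Z_n(ω))`: the length of the second-to-last block. -/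
noncomputable def Lfn (P : PLRS) (l : List ℕ) : ℕ := P.ell (P.Z l)

/-- `h_t`: remove the second-to-last block of a legal decomposition. -/
def removeSTL (P : PLRS) (l : List ℕ) : List ℕ :=
  ((((P.blocks l).reverse).eraseIdx 1).reverse).flatten

/-- The Type 2 block of size `t`: `(c_1, …, c_{ℓ(t)-1}, t - (c_1 + ⋯ + c_{ℓ(t)-1}))`. -/
noncomputable def type2Block (P : PLRS) (t : ℕ) : List ℕ :=
  ((List.range (P.ell t - 1)).map fun i => P.c (i + 1)) ++
    [t - ∑ i ∈ Finset.Icc 1 (P.ell t - 1), P.c i]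

/-- Insert the Type 2 block of size `t` immediately before the last block. -/
noncomputable def insertSTL (P : PLRS) (t : ℕ) (l : List ℕ) : List ℕ :=
  ((((P.blocks l).reverse).insertIdx 1 (P.type2Block t)).reverse).flatten

/-- A Type 1 block: `(c_1, …, c_m)` with `1 ≤ m < L`. -/
def IsType1Block (P : PLRS) (bl : List ℕ) : Prop :=
  ∃ m, 1 ≤ m ∧ m < P.L ∧ bl = (List.range m).map fun i => P.c (i + 1)

/-- A Type 2 block: `(c_1, …, c_{s-1}, a)` with `1 ≤ s ≤ L` and `a < c_s`. -/
def IsType2Block (P : PLRS) (bl : List ℕ) : Prop :=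
  ∃ s, 1 ≤ s ∧ s ≤ P.L ∧ ∃ a, a < P.c s ∧
    bl = ((List.range (s - 1)).map fun i => P.c (i + 1)) ++ [a]

/-- Conditional expectation of `g` on `Ω_n` given `Z_n = t`. -/
noncomputable def condExpect (P : PLRS) (n t : ℕ) (g : List ℕ → ℝ) : ℝ :=
  expectOn (P.Omega n ∩ {l | P.Z l = t}) g

end PLRS

open PLRS

namespace PLRS

variable (P : PLRS)

/-- partial sums of coefficients -/
def psum (s : ℕ) : ℕ := ∑ i ∈ Finset.Icc 1 s, P.c i

/-- prefix of coefficients, as a list -/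
def pref (s : ℕ) : List ℕ := (List.range s).map fun i => P.c (i + 1)

@[simp] lemma pref_length (s : ℕ) : (P.pref s).length = s := by simp [pref]

lemma psum_eq_range (s : ℕ) : P.psum s = ∑ i ∈ Finset.range s, P.c (i + 1) := by
  unfold psum
  rw [show Finset.Icc 1 s = Finset.Ico 1 (s+1) by rfl, Finset.sum_Ico_eq_sum_range]
  simp [add_comm]

@[simp] lemma pref_sum (s : ℕ) : (P.pref s).sum = P.psum s := by
  rw [psum_eq_range]
  induction s with
  | zero => simp [pref]
  | succ k ih => simp [pref, List.range_succ, Finset.sum_range_succ, ← ih, pref]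

lemma psum_mono : Monotone P.psum := by
  intro i j hij
  exact Finset.sum_le_sum_of_subset (Finset.Icc_subset_Icc le_rfl hij)

lemma psum_succ (s : ℕ) : P.psum (s + 1) = P.psum s + P.c (s + 1) :=
  Finset.sum_Icc_succ_top (by omega) _

lemma pref_getD {i s : ℕ} (h : i < s) : (P.pref s).getD i 0 = P.c (i + 1) := by
  rw [List.getD_eq_getElem?_getD]
  simp [pref, List.getElem?_map, List.getElem?_range h]

lemma H_ge_one {n : ℕ} (h : 1 ≤ n) : 1 ≤ P.H n := P.H_pos n h

section NonDegenerate

variable (hd : 2 ≤ P.c 1 ∨ 2 ≤ P.L)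

include hd in
lemma H_lt_succ {n : ℕ} (h : 1 ≤ n) : P.H n < P.H (n + 1) := by
  rcases lt_or_ge n P.L with hnL | hLn
  · rw [P.H_init n h hnL]
    have h1 : P.c 1 * P.H (n + 1 - 1) ≤ ∑ i ∈ Finset.Icc 1 n, P.c i * P.H (n + 1 - i) :=
      Finset.single_le_sum (f := fun i => P.c i * P.H (n + 1 - i))
        (fun i _ => Nat.zero_le _) (by simp [Finset.mem_Icc, h])
    have : P.H n ≤ P.c 1 * P.H n := Nat.le_mul_of_pos_left _ P.c1_pos
    simp only [Nat.add_sub_cancel] at h1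
    omega
  · rw [P.H_rec n hLn]
    rcases hd with hc | hL
    · -- L could be anything; use the first term
      have h1 : P.c 1 * P.H (n + 1 - 1) ≤ ∑ i ∈ Finset.Icc 1 P.L, P.c i * P.H (n + 1 - i) :=
        Finset.single_le_sum (f := fun i => P.c i * P.H (n + 1 - i))
          (fun i _ => Nat.zero_le _) (by simp [Finset.mem_Icc]; exact P.L_pos)
      simp only [Nat.add_sub_cancel] at h1
      have h2 : 2 * P.H n ≤ P.c 1 * P.H n := Nat.mul_le_mul_right _ hc
      have h3 : 1 ≤ P.H n := P.H_ge_one h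
      omega
    · have hsub : ({1, P.L} : Finset ℕ) ⊆ Finset.Icc 1 P.L := by
        intro x hx
        simp only [Finset.mem_insert, Finset.mem_singleton] at hx
        rcases hx with rfl | rfl <;> simp [Finset.mem_Icc, P.L_pos] <;> omega
      have h1 : ∑ i ∈ ({1, P.L} : Finset ℕ), P.c i * P.H (n + 1 - i)
          ≤ ∑ i ∈ Finset.Icc 1 P.L, P.c i * P.H (n + 1 - i) :=
        Finset.sum_le_sum_of_subset hsub
      rw [Finset.sum_pair (by omega)] at h1
      have h2 : P.H n ≤ P.c 1 * P.H (n + 1 - 1) := by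
        simpa using Nat.le_mul_of_pos_left _ P.c1_pos
      have h3 : 1 ≤ P.c P.L * P.H (n + 1 - P.L) := by
        have : 1 ≤ P.H (n + 1 - P.L) := P.H_ge_one (by omega)
        exact Nat.mul_pos P.cL_pos this
      omega

include hd in
lemma H_strict_mono {m n : ℕ} (h1 : 1 ≤ m) (h2 : m < n) : P.H m < P.H n := by
  induction n with
  | zero => omega
  | succ k ih =>
    rcases Nat.lt_or_ge m k with hk | hk
    · exact lt_trans (ih hk) (P.H_lt_succ hd (by omega))
    · have : m = k := by omega
      subst this; exact P.H_lt_succ hd h1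

include hd in
lemma H_mono {m n : ℕ} (h1 : 1 ≤ m) (h2 : m ≤ n) : P.H m ≤ P.H n := by
  rcases eq_or_lt_of_le h2 with rfl | h; · rfl
  exact le_of_lt (P.H_strict_mono hd h1 h)

end NonDegenerate

end PLRS
namespace PLRS

variable (P : PLRS)

lemma value_nil : P.value [] = 0 := by simp [value]

end PLRS

lemma sum_Icc_shift (g : ℕ → ℕ) (k : ℕ) :
    ∑ j ∈ Finset.Icc 1 k, g j = ∑ i ∈ Finset.range k, g (i + 1) := by
  rw [show Finset.Icc 1 k = Finset.Ico 1 (k+1) by rfl, Finset.sum_Ico_eq_sum_range]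
  simp [add_comm]

namespace PLRS

variable (P : PLRS)

lemma value_append (xs ys : List ℕ) :
    P.value (xs ++ ys) =
      (∑ i ∈ Finset.range xs.length, xs.getD i 0 * P.H (xs.length + ys.length - i))
        + P.value ys := by
  unfold value
  rw [List.length_append, Finset.sum_range_add]
  congr 1
  · apply Finset.sum_congr rfl
    intro i hi
    rw [Finset.mem_range] at hi
    rw [List.getD_append _ _ _ _ (by omega)]
  · apply Finset.sum_congr rfl
    intro i hi
    rw [Finset.mem_range] at hi
    rw [List.getD_append_right _ _ _ _ (by omega)]
    have e1 : xs.length + i - xs.length = i := by omega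
    have e2 : xs.length + ys.length - (xs.length + i) = ys.length - i := by omega
    rw [e1, e2]

lemma value_block_cons (k a : ℕ) (rest : List ℕ) :
    P.value (P.pref k ++ a :: rest) =
      (∑ j ∈ Finset.Icc 1 k, P.c j * P.H (k + rest.length + 2 - j))
        + a * P.H (rest.length + 1) + P.value rest := by
  have hre : P.pref k ++ a :: rest = (P.pref k ++ [a]) ++ rest := by simp
  rw [hre, P.value_append]
  have hlen : (P.pref k ++ [a]).length = k + 1 := by simp
  rw [hlen]
  congr 1
  rw [Finset.sum_range_succ]
  congr 1
  · rw [sum_Icc_shift (fun j => P.c j * P.H (k + rest.length + 2 - j)) k]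
    apply Finset.sum_congr rfl
    intro i hi
    rw [Finset.mem_range] at hi
    rw [List.getD_append _ _ _ _ (by simp; omega), P.pref_getD hi]
    congr 2
    omega
  · rw [List.getD_append_right _ _ _ _ (by simp)]
    simp only [pref_length, Nat.sub_self, List.getD_cons_zero]
    congr 2
    omega

lemma sum_Icc_le_H (s m : ℕ) (hsL : s ≤ P.L) (hsm : s ≤ m) (hm : 1 ≤ m) :
    ∑ j ∈ Finset.Icc 1 s, P.c j * P.H (m + 1 - j) ≤ P.H (m + 1) := by
  rcases lt_or_ge m P.L with hmL | hLm
  · rw [P.H_init m hm hmL]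
    exact le_trans (Finset.sum_le_sum_of_subset (Finset.Icc_subset_Icc le_rfl hsm)) (by omega)
  · rw [P.H_rec m hLm]
    exact Finset.sum_le_sum_of_subset (Finset.Icc_subset_Icc le_rfl hsL)

lemma pref_ne_nil {m : ℕ} (h : 1 ≤ m) : P.pref m ≠ [] := by
  intro hc
  have := P.pref_length m
  rw [hc] at this
  simp at this
  omega

lemma pref_succ (k : ℕ) : P.pref (k + 1) = P.pref k ++ [P.c (k + 1)] := by
  simp [pref, List.range_succ]

lemma value_pref (m : ℕ) :
    P.value (P.pref m) = ∑ j ∈ Finset.Icc 1 m, P.c j * P.H (m + 1 - j) := by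
  rcases Nat.eq_zero_or_pos m with rfl | hm
  · simp [pref, value]
  · obtain ⟨k, rfl⟩ : ∃ k, m = k + 1 := ⟨m - 1, by omega⟩
    rw [P.pref_succ, show P.pref k ++ [P.c (k+1)] = P.pref k ++ P.c (k+1) :: [] from rfl,
      P.value_block_cons, P.value_nil, Finset.sum_Icc_succ_top (show 1 ≤ k+1 by omega)]
    have e1 : k + 1 + 1 - (k + 1) = 1 := by omega
    rw [e1, P.H_one]
    have e3 : ∑ j ∈ Finset.Icc 1 k, P.c j * P.H (k + List.length ([] : List ℕ) + 2 - j)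
        = ∑ j ∈ Finset.Icc 1 k, P.c j * P.H (k + 1 + 1 - j) := by
      apply Finset.sum_congr rfl
      intro j hj
      rw [Finset.mem_Icc] at hj
      have : k + List.length ([] : List ℕ) + 2 - j = k + 1 + 1 - j := by simp
      rw [this]
    rw [e3]
    have e4 : P.H (List.length ([] : List ℕ) + 1) = 1 := by simp [P.H_one]
    rw [e4]
    omega

lemma value_legal_lt {l : List ℕ} (hl : P.IsLegal l) :
    P.value l + 1 ≤ P.H (l.length + 1) := by
  induction hl with
  | cond1 m h1 h2 =>
    rw [show ((List.range m).map fun i => P.c (i + 1)) = P.pref m from rfl]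
    rw [P.value_pref, P.pref_length, P.H_init m h1 h2]
  | cond2 s hs1 hs2 a ha rest hrest ih =>
    obtain ⟨k, rfl⟩ : ∃ k, s = k + 1 := ⟨s - 1, by omega⟩
    simp only [Nat.add_sub_cancel] at *
    rw [show ((List.range k).map fun i => P.c (i + 1)) = P.pref k from rfl]
    rw [P.value_block_cons]
    have hlen : (P.pref k ++ a :: rest).length = k + 1 + rest.length := by simp; omega
    rw [hlen]
    set r := rest.length with hr
    have h1 : a * P.H (r + 1) + P.value rest + 1 ≤ P.c (k+1) * P.H (r + 1) := by
      calc a * P.H (r + 1) + P.value rest + 1 ≤ a * P.H (r + 1) + P.H (r + 1) := by omega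
        _ = (a + 1) * P.H (r + 1) := by ring
        _ ≤ P.c (k+1) * P.H (r + 1) := Nat.mul_le_mul_right _ (by omega)
    have h3 : ∑ j ∈ Finset.Icc 1 (k+1), P.c j * P.H (k + 1 + r + 1 - j)
        = (∑ j ∈ Finset.Icc 1 k, P.c j * P.H (k + 1 + r + 1 - j))
          + P.c (k+1) * P.H (r + 1) := by
      rw [Finset.sum_Icc_succ_top (show 1 ≤ k+1 by omega),
        show k + 1 + r + 1 - (k + 1) = r + 1 by omega]
    have h4 := P.sum_Icc_le_H (k+1) (k + 1 + r) hs2 (by omega) (by omega)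
    have h5 : ∑ j ∈ Finset.Icc 1 k, P.c j * P.H (k + r + 2 - j)
        = ∑ j ∈ Finset.Icc 1 k, P.c j * P.H (k + 1 + r + 1 - j) := by
      apply Finset.sum_congr rfl
      intro j hj
      rw [Finset.mem_Icc] at hj
      congr 2
      omega
    rw [h5]
    omega
  | cond2_last s hs1 hs2 a ha =>
    obtain ⟨k, rfl⟩ : ∃ k, s = k + 1 := ⟨s - 1, by omega⟩
    simp only [Nat.add_sub_cancel] at *
    rw [show ((List.range k).map fun i => P.c (i + 1)) = P.pref k from rfl]
    rw [show (P.pref k ++ [a]) = P.pref k ++ a :: [] from rfl, P.value_block_cons, P.value_nil]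
    have hlen : (P.pref k ++ a :: ([] : List ℕ)).length = k + 1 := by simp
    rw [hlen]
    have e4 : P.H (List.length ([] : List ℕ) + 1) = 1 := by simp [P.H_one]
    rw [e4]
    have h3 : ∑ j ∈ Finset.Icc 1 (k+1), P.c j * P.H (k + 1 + 1 - j)
        = (∑ j ∈ Finset.Icc 1 k, P.c j * P.H (k + 1 + 1 - j)) + P.c (k+1) * 1 := by
      rw [Finset.sum_Icc_succ_top (show 1 ≤ k+1 by omega),
        show k + 1 + 1 - (k + 1) = 1 by omega, P.H_one]
    have h4 := P.sum_Icc_le_H (k+1) (k+1) hs2 le_rfl (by omega)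
    have h5 : ∑ j ∈ Finset.Icc 1 k, P.c j * P.H (k + List.length ([] : List ℕ) + 2 - j)
        = ∑ j ∈ Finset.Icc 1 k, P.c j * P.H (k + 1 + 1 - j) := by
      apply Finset.sum_congr rfl
      intro j hj
      rw [Finset.mem_Icc] at hj
      have : k + List.length ([] : List ℕ) + 2 - j = k + 1 + 1 - j := by simp
      rw [this]
    rw [h5]
    omega

lemma headI_mul_H_le_value {l : List ℕ} (h : l ≠ []) :
    l.headI * P.H l.length ≤ P.value l := by
  have hlen : 1 ≤ l.length := List.length_pos_iff.mpr h
  have h0 : l.getD 0 0 = l.headI := by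
    cases l with
    | nil => simp at h
    | cons x xs => rfl
  unfold value
  have := Finset.single_le_sum (f := fun i => l.getD i 0 * P.H (l.length - i))
    (fun i _ => Nat.zero_le _) (Finset.mem_range.mpr (show 0 < l.length from hlen))
  simp only [h0, Nat.sub_zero] at this
  exact this

end PLRS
namespace PLRS

variable (P : PLRS)

lemma legal_ne_nil {l : List ℕ} (hl : P.IsLegal l) : l ≠ [] := by
  induction hl with
  | cond1 m h1 h2 => exact P.pref_ne_nil h1
  | cond2 s hs1 hs2 a ha rest hrest ih => simp
  | cond2_last s hs1 hs2 a ha => simp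

lemma Omega_eq (hd : 2 ≤ P.c 1 ∨ 2 ≤ P.L) {n : ℕ} (hn : 1 ≤ n) :
    P.Omega n = {l | P.IsLegal l ∧ 0 < l.headI ∧ l.length = n} := by
  ext l
  simp only [Omega, LegalDecomp, Set.mem_setOf_eq]
  constructor
  · rintro ⟨⟨hleg, hhead⟩, hlow, hhigh⟩
    refine ⟨hleg, hhead, ?_⟩
    have hne : l ≠ [] := P.legal_ne_nil hleg
    have hlen : 1 ≤ l.length := List.length_pos_iff.mpr hne
    have h1 : P.H l.length ≤ P.value l := by
      have := P.headI_mul_H_le_value hne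
      have h2 : P.H l.length ≤ l.headI * P.H l.length := Nat.le_mul_of_pos_left _ hhead
      omega
    have h2 := P.value_legal_lt hleg
    -- H (l.length) ≤ value < H (n+1)  and  H n ≤ value < H (l.length + 1)
    by_contra hne'
    rcases Nat.lt_or_ge l.length n with hlt | hge
    · -- l.length < n : value < H (l.length + 1) ≤ H n contradiction
      have : P.H (l.length + 1) ≤ P.H n := P.H_mono hd (by omega) (by omega)
      omega
    · have hgt : n < l.length := by omega
      have : P.H (n + 1) ≤ P.H l.length := P.H_mono hd (by omega) (by omega)
      omega
  · rintro ⟨hleg, hhead, hlen⟩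
    have hne : l ≠ [] := P.legal_ne_nil hleg
    refine ⟨⟨hleg, hhead⟩, ?_, ?_⟩
    · have := P.headI_mul_H_le_value hne
      have h2 : P.H l.length ≤ l.headI * P.H l.length := Nat.le_mul_of_pos_left _ hhead
      rw [hlen] at *
      omega
    · have := P.value_legal_lt hleg
      rw [hlen] at this
      omega

end PLRS
namespace PLRS

variable (P : PLRS)

lemma blocks_nil : P.blocks [] = [] := by rw [PLRS.blocks]; simp

lemma firstMismatch_pref (m : ℕ) : P.firstMismatch (P.pref m) = none := by
  unfold firstMismatch
  rw [List.find?_eq_none]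
  intro x hx
  rw [P.pref_length, List.mem_range] at hx
  rw [P.pref_getD hx]
  simp

lemma firstMismatch_block (k a : ℕ) (rest : List ℕ) (ha : a ≠ P.c (k + 1)) :
    P.firstMismatch (P.pref k ++ a :: rest) = some k := by
  unfold firstMismatch
  rw [List.find?_eq_some_iff_append]
  have hlen : (P.pref k ++ a :: rest).length = k + 1 + rest.length := by simp; omega
  have hgk : (P.pref k ++ a :: rest).getD k 0 = a := by
    rw [List.getD_append_right _ _ _ _ (by simp), P.pref_length]
    simp
  refine ⟨by rw [hgk]; simpa using ha, List.range k,
    (List.range rest.length).map (fun x => (k+1) + x), ?_, ?_⟩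
  · rw [hlen, List.range_add, List.range_succ, List.append_assoc, List.singleton_append]
  · intro x hx
    rw [List.mem_range] at hx
    have : (P.pref k ++ a :: rest).getD x 0 = P.c (x + 1) := by
      rw [List.getD_append _ _ _ _ (by simp; omega), P.pref_getD hx]
    rw [this]
    simp

lemma blocks_block_cons (k a : ℕ) (rest : List ℕ) (ha : a ≠ P.c (k + 1)) :
    P.blocks (P.pref k ++ a :: rest) = (P.pref k ++ [a]) :: P.blocks rest := by
  rw [PLRS.blocks]
  have hne : P.pref k ++ a :: rest ≠ [] := by simp
  simp only [hne, dite_false, P.firstMismatch_block k a rest ha]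
  have h1 : (P.pref k ++ a :: rest).take (k + 1) = P.pref k ++ [a] := by
    rw [show P.pref k ++ a :: rest = (P.pref k ++ [a]) ++ rest by simp]
    exact List.take_left' (by simp)
  have h2 : (P.pref k ++ a :: rest).drop (k + 1) = rest := by
    rw [show P.pref k ++ a :: rest = (P.pref k ++ [a]) ++ rest by simp]
    exact List.drop_left' (by simp)
  rw [h1, h2]

lemma blocks_pref (m : ℕ) (hm : 1 ≤ m) : P.blocks (P.pref m) = [P.pref m] := by
  rw [PLRS.blocks]
  simp only [P.pref_ne_nil hm, dite_false, P.firstMismatch_pref m]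

/-- chains of blocks: all blocks type 2 except the last, which is type 1 or type 2 -/
inductive Chain (P : PLRS) : List (List ℕ) → Prop
  | last1 (b : List ℕ) (h : P.IsType1Block b) : Chain P [b]
  | last2 (b : List ℕ) (h : P.IsType2Block b) : Chain P [b]
  | cons (b : List ℕ) (h : P.IsType2Block b) (bs : List (List ℕ)) (hbs : Chain P bs) :
      Chain P (b :: bs)

lemma chain_ne_nil {bs : List (List ℕ)} (h : P.Chain bs) : bs ≠ [] := by
  cases h <;> simp

lemma type1_len {b : List ℕ} (h : P.IsType1Block b) : 1 ≤ b.length ∧ b.length ≤ P.L := by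
  obtain ⟨m, h1, h2, rfl⟩ := h
  simp
  omega

lemma type2_eq {b : List ℕ} (h : P.IsType2Block b) :
    ∃ s a, 1 ≤ s ∧ s ≤ P.L ∧ a < P.c s ∧ b = P.pref (s - 1) ++ [a] := by
  obtain ⟨s, h1, h2, a, ha, rfl⟩ := h
  exact ⟨s, a, h1, h2, ha, rfl⟩

lemma type2_len {b : List ℕ} (h : P.IsType2Block b) : 1 ≤ b.length ∧ b.length ≤ P.L := by
  obtain ⟨s, a, h1, h2, ha, rfl⟩ := P.type2_eq h
  simp
  omega

lemma type2_sum {b : List ℕ} (h : P.IsType2Block b) :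
    ∃ s a, 1 ≤ s ∧ s ≤ P.L ∧ a < P.c s ∧ b = P.pref (s - 1) ++ [a]
      ∧ b.sum = P.psum (s - 1) + a ∧ b.length = s := by
  obtain ⟨s, a, h1, h2, ha, rfl⟩ := P.type2_eq h
  refine ⟨s, a, h1, h2, ha, rfl, by simp, by simp; omega⟩

lemma blocks_flatten {bs : List (List ℕ)} (h : P.Chain bs) : P.blocks bs.flatten = bs := by
  induction h with
  | last1 b hb =>
    obtain ⟨m, h1, h2, rfl⟩ := hb
    rw [show ((List.range m).map fun i => P.c (i + 1)) = P.pref m from rfl]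
    simp only [List.flatten_cons, List.flatten_nil, List.append_nil]
    exact P.blocks_pref m h1
  | last2 b hb =>
    obtain ⟨s, a, h1, h2, ha, rfl⟩ := P.type2_eq hb
    obtain ⟨k, rfl⟩ : ∃ k, s = k + 1 := ⟨s - 1, by omega⟩
    simp only [Nat.add_sub_cancel] at *
    simp only [List.flatten_cons, List.flatten_nil, List.append_nil]
    rw [show P.pref k ++ [a] = P.pref k ++ a :: [] from rfl,
      P.blocks_block_cons k a [] (by omega), P.blocks_nil]
  | cons b hb bs hbs ih =>
    obtain ⟨s, a, h1, h2, ha, rfl⟩ := P.type2_eq hb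
    obtain ⟨k, rfl⟩ : ∃ k, s = k + 1 := ⟨s - 1, by omega⟩
    simp only [Nat.add_sub_cancel] at *
    simp only [List.flatten_cons, List.append_assoc, List.singleton_append]
    rw [P.blocks_block_cons k a bs.flatten (by omega), ih]

lemma chain_legal {bs : List (List ℕ)} (h : P.Chain bs) : P.IsLegal bs.flatten := by
  induction h with
  | last1 b hb =>
    obtain ⟨m, h1, h2, rfl⟩ := hb
    simp only [List.flatten_cons, List.flatten_nil, List.append_nil]
    exact IsLegal.cond1 m h1 h2
  | last2 b hb =>
    obtain ⟨s, h1, h2, a, ha, rfl⟩ := hb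
    simp only [List.flatten_cons, List.flatten_nil, List.append_nil]
    exact IsLegal.cond2_last s h1 h2 a ha
  | cons b hb bs hbs ih =>
    obtain ⟨s, h1, h2, a, ha, rfl⟩ := hb
    simp only [List.flatten_cons, List.append_assoc, List.singleton_append]
    exact IsLegal.cond2 s h1 h2 a ha bs.flatten ih

lemma legal_chain {l : List ℕ} (h : P.IsLegal l) : ∃ bs, P.Chain bs ∧ l = bs.flatten := by
  induction h with
  | cond1 m h1 h2 =>
    exact ⟨[(List.range m).map fun i => P.c (i + 1)],
      Chain.last1 _ ⟨m, h1, h2, rfl⟩, by simp⟩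
  | cond2 s hs1 hs2 a ha rest hrest ih =>
    obtain ⟨bs, hc, rfl⟩ := ih
    exact ⟨(((List.range (s-1)).map fun i => P.c (i + 1)) ++ [a]) :: bs,
      Chain.cons _ ⟨s, hs1, hs2, a, ha, rfl⟩ _ hc, by simp⟩
  | cond2_last s hs1 hs2 a ha =>
    exact ⟨[((List.range (s-1)).map fun i => P.c (i + 1)) ++ [a]],
      Chain.last2 _ ⟨s, hs1, hs2, a, ha, rfl⟩, by simp⟩

lemma chain_block_len {bs : List (List ℕ)} (h : P.Chain bs) {b : List ℕ} (hb : b ∈ bs) :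
    1 ≤ b.length ∧ b.length ≤ P.L := by
  induction h with
  | last1 b' hb' =>
    rw [List.mem_singleton] at hb
    subst hb
    exact P.type1_len hb'
  | last2 b' hb' =>
    rw [List.mem_singleton] at hb
    subst hb
    exact P.type2_len hb'
  | cons b' hb' bs' hbs' ih =>
    rcases List.mem_cons.mp hb with rfl | hmem
    · exact P.type2_len hb'
    · exact ih hmem

lemma chain_flatten_length_le {bs : List (List ℕ)} (h : P.Chain bs) :
    bs.flatten.length ≤ bs.length * P.L := by
  induction h with
  | last1 b hb => simpa using (P.type1_len hb).2
  | last2 b hb => simpa using (P.type2_len hb).2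
  | cons b hb bs hbs ih =>
    simp only [List.flatten_cons, List.length_append, List.length_cons]
    have := (P.type2_len hb).2
    have : bs.flatten.length ≤ bs.length * P.L := ih
    calc b.length + bs.flatten.length ≤ P.L + bs.length * P.L := by
          have := (P.type2_len hb).2; omega
      _ = (bs.length + 1) * P.L := by ring

lemma headI_flatten_cons (b : List ℕ) (bs : List (List ℕ)) (hb : b ≠ []) :
    ((b :: bs).flatten).headI = b.headI := by
  cases b with
  | nil => simp at hb
  | cons x xs => simp

lemma type2_ne_nil {b : List ℕ} (h : P.IsType2Block b) : b ≠ [] := by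
  obtain ⟨s, a, h1, h2, ha, rfl⟩ := P.type2_eq h
  simp

lemma type1_ne_nil {b : List ℕ} (h : P.IsType1Block b) : b ≠ [] := by
  obtain ⟨m, h1, h2, rfl⟩ := h
  exact P.pref_ne_nil h1

lemma chain_middle_type2 (u : List (List ℕ)) (B : List ℕ) (v : List (List ℕ))
    (h : P.Chain (u ++ B :: v)) (hv : v ≠ []) : P.IsType2Block B := by
  induction u with
  | nil =>
    simp only [List.nil_append] at h
    cases h with
    | last1 b hb => simp at hv
    | last2 b hb => simp at hv
    | cons b hb bs hbs => exact hb
  | cons x u ih =>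
    simp only [List.cons_append] at h
    generalize hw : u ++ B :: v = w at h
    cases h with
    | last1 b hb => simp at hw
    | last2 b hb => simp at hw
    | cons b hb bs hbs => rw [← hw] at hbs; exact ih hbs

lemma chain_erase (u : List (List ℕ)) (B C : List ℕ)
    (h : P.Chain (u ++ [B, C])) : P.Chain (u ++ [C]) := by
  induction u with
  | nil =>
    simp only [List.nil_append] at *
    cases h with
    | cons b hb bs hbs => exact hbs
  | cons x u ih =>
    simp only [List.cons_append] at *
    generalize hw : u ++ [B, C] = w at h
    cases h with
    | last1 b hb => simp at hw
    | last2 b hb => simp at hw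
    | cons b hb bs hbs => rw [← hw] at hbs; exact Chain.cons _ hb _ (ih hbs)

lemma chain_insert (u : List (List ℕ)) (T C : List ℕ) (hT : P.IsType2Block T)
    (h : P.Chain (u ++ [C])) : P.Chain (u ++ [T, C]) := by
  induction u with
  | nil =>
    simp only [List.nil_append] at *
    exact Chain.cons _ hT _ h
  | cons x u ih =>
    simp only [List.cons_append] at *
    generalize hw : u ++ [C] = w at h
    cases h with
    | last1 b hb => simp at hw
    | last2 b hb => simp at hw
    | cons b hb bs hbs => rw [← hw] at hbs; exact Chain.cons _ hb _ (ih hbs)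

end PLRS

lemma exists_rear_two {α : Type*} (bs : List α) (h : 2 ≤ bs.length) :
    ∃ u B C, bs = u ++ [B, C] := by
  rcases hr : bs.reverse with _ | ⟨C, r'⟩
  · have h1 : bs.reverse.length = 0 := by rw [hr]; rfl
    rw [List.length_reverse] at h1; omega
  · rcases hr' : r' with _ | ⟨B, r''⟩
    · subst hr'
      have h1 : bs.reverse.length = 1 := by rw [hr]; rfl
      rw [List.length_reverse] at h1; omega
    · refine ⟨r''.reverse, B, C, ?_⟩
      have : bs = (C :: B :: r'').reverse := by
        rw [← hr' ,← hr, List.reverse_reverse]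
      rw [this]
      simp
namespace PLRS

variable (P : PLRS)

lemma ell_set_eq (t : ℕ) : {s : ℕ | t < ∑ i ∈ Finset.Icc 1 s, P.c i} = {s | t < P.psum s} :=
  rfl

lemma size_eq_psum : P.size = P.psum P.L := rfl

lemma ell_spec {t : ℕ} (ht : t < P.size) :
    1 ≤ P.ell t ∧ P.ell t ≤ P.L ∧ P.psum (P.ell t - 1) ≤ t ∧ t < P.psum (P.ell t) := by
  have hne : {s : ℕ | t < P.psum s}.Nonempty := ⟨P.L, ht⟩
  have hmem : P.ell t ∈ {s : ℕ | t < P.psum s} := Nat.sInf_mem hne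
  have h2 : t < P.psum (P.ell t) := hmem
  have hle : P.ell t ≤ P.L := Nat.sInf_le (show P.L ∈ {s : ℕ | t < P.psum s} from ht)
  have h1 : 1 ≤ P.ell t := by
    by_contra h
    have : P.ell t = 0 := by omega
    rw [this] at h2
    simp [psum] at h2
  refine ⟨h1, hle, ?_, h2⟩
  by_contra h
  push_neg at h
  have : P.ell t ≤ P.ell t - 1 := Nat.sInf_le (show P.ell t - 1 ∈ {s : ℕ | t < P.psum s} from h)
  omega

lemma ell_eq {s t : ℕ} (hs1 : 1 ≤ s) (h1 : P.psum (s - 1) ≤ t) (h2 : t < P.psum s) :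
    P.ell t = s := by
  have hub : P.ell t ≤ s := Nat.sInf_le (show s ∈ {s' : ℕ | t < P.psum s'} from h2)
  have hlb : ¬ (P.ell t < s) := by
    intro h
    have hle : P.ell t ≤ s - 1 := by omega
    have hmono : P.psum (P.ell t) ≤ P.psum (s - 1) := P.psum_mono hle
    have h3 : t < P.psum (P.ell t) :=
      Nat.sInf_mem (show {s' : ℕ | t < P.psum s'}.Nonempty from ⟨s, h2⟩)
    omega
  omega

lemma type2Block_eq (t : ℕ) :
    P.type2Block t = P.pref (P.ell t - 1) ++ [t - P.psum (P.ell t - 1)] := rfl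

lemma type2Block_isType2 {t : ℕ} (ht : t < P.size) : P.IsType2Block (P.type2Block t) := by
  obtain ⟨h1, h2, h3, h4⟩ := P.ell_spec ht
  refine ⟨P.ell t, h1, h2, t - P.psum (P.ell t - 1), ?_, rfl⟩
  have := P.psum_succ (P.ell t - 1)
  have he : P.ell t - 1 + 1 = P.ell t := by omega
  rw [he] at this
  omega

lemma type2Block_sum {t : ℕ} (ht : t < P.size) : (P.type2Block t).sum = t := by
  obtain ⟨h1, h2, h3, h4⟩ := P.ell_spec ht
  rw [P.type2Block_eq]
  simp
  omega

lemma type2Block_length {t : ℕ} (ht : t < P.size) : (P.type2Block t).length = P.ell t := by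
  obtain ⟨h1, h2, h3, h4⟩ := P.ell_spec ht
  rw [P.type2Block_eq]
  simp
  omega

lemma type2_unique {B : List ℕ} {t : ℕ} (hB : P.IsType2Block B) (hsum : B.sum = t) :
    t < P.size ∧ B = P.type2Block t ∧ B.length = P.ell t := by
  obtain ⟨s, a, h1, h2, ha, rfl, hsm, hlen⟩ := P.type2_sum hB
  have hps : P.psum s = P.psum (s - 1) + P.c s := by
    have := P.psum_succ (s - 1)
    have he : s - 1 + 1 = s := by omega
    rw [he] at this
    exact this
  have hts : t < P.psum s := by omega
  have htsize : t < P.size := by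
    have := P.psum_mono h2
    rw [size_eq_psum]
    omega
  have hell : P.ell t = s := P.ell_eq h1 (by omega) hts
  have hblk : P.type2Block t = P.pref (s - 1) ++ [t - P.psum (s - 1)] := by
    rw [P.type2Block_eq, hell]
  have haeq : t - P.psum (s - 1) = a := by omega
  rw [hblk, haeq]
  exact ⟨htsize, rfl, by rw [hlen, hell]⟩

lemma pref_headI {m : ℕ} (hm : 1 ≤ m) : (P.pref m).headI = P.c 1 := by
  obtain ⟨k, rfl⟩ : ∃ k, m = k + 1 := ⟨m - 1, by omega⟩
  rw [pref, List.range_succ_eq_map]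
  simp

lemma chain_pad (j : ℕ) (B : List ℕ) (hB : P.IsType2Block B) :
    P.Chain (B :: List.replicate j [0]) := by
  induction j generalizing B with
  | zero => exact Chain.last2 B hB
  | succ k ih =>
    rw [List.replicate_succ]
    exact Chain.cons B hB _ (ih [0] ⟨1, le_rfl, P.L_pos, 0, P.c1_pos, by simp⟩)

lemma flatten_replicate_zero (j : ℕ) :
    (List.replicate j ([0] : List ℕ)).flatten = List.replicate j 0 := by
  induction j with
  | zero => simp
  | succ k ih => rw [List.replicate_succ, List.flatten_cons, ih]; simp [List.replicate_succ]

lemma Omega_nonempty (hd : 2 ≤ P.c 1 ∨ 2 ≤ P.L) {m : ℕ} (hm : P.L < m) :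
    (P.Omega m).Nonempty := by
  rcases Nat.lt_or_ge (P.c 1) 2 with hc | hc
  · -- c 1 = 1, so L ≥ 2 ; head block is (c 1, ..., c (L-1), 0)
    have hL : 2 ≤ P.L := hd.resolve_left (by omega)
    have hc1 : P.c 1 = 1 := by have := P.c1_pos; omega
    set B : List ℕ := P.pref (P.L - 1) ++ [0] with hB
    have hBt2 : P.IsType2Block B := ⟨P.L, P.L_pos, le_rfl, 0, P.cL_pos, rfl⟩
    have hBlen : B.length = P.L := by simp [hB]; omega
    set j : ℕ := m - P.L with hj
    have hch : P.Chain (B :: List.replicate j [0]) := P.chain_pad j B hBt2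
    refine ⟨(B :: List.replicate j [0]).flatten, ?_⟩
    rw [P.Omega_eq hd (by omega)]
    refine ⟨P.chain_legal hch, ?_, ?_⟩
    · rw [PLRS.headI_flatten_cons B _ (P.type2_ne_nil hBt2), hB]
      have h1 : (P.pref (P.L - 1)).headI = P.c 1 := P.pref_headI (by omega)
      have h2 : (P.pref (P.L-1) ++ [0]).headI = (P.pref (P.L-1)).headI := by
        cases hp : P.pref (P.L - 1) with
        | nil => exact absurd hp (P.pref_ne_nil (by omega))
        | cons x xs => simp
      rw [h2, h1]
      omega
    · rw [List.flatten_cons, List.length_append, hBlen, PLRS.flatten_replicate_zero]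
      simp [hj]
      omega
  · -- 2 ≤ c 1 ; head block is (1)
    have hBt2 : P.IsType2Block [1] := ⟨1, le_rfl, P.L_pos, 1, by omega, by simp⟩
    set j : ℕ := m - 1 with hj
    have hch : P.Chain ([1] :: List.replicate j [0]) := P.chain_pad j [1] hBt2
    refine ⟨([1] :: List.replicate j [0]).flatten, ?_⟩
    rw [P.Omega_eq hd (by omega)]
    refine ⟨P.chain_legal hch, ?_, ?_⟩
    · rw [PLRS.headI_flatten_cons [1] _ (by simp)]
      simp
    · rw [List.flatten_cons, PLRS.flatten_replicate_zero]
      simp [hj]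
      omega

lemma finite_len_bounded (n M : ℕ) :
    {l : List ℕ | l.length = n ∧ ∀ x ∈ l, x ≤ M}.Finite := by
  induction n with
  | zero =>
    apply Set.Finite.subset (Set.finite_singleton ([] : List ℕ))
    rintro l ⟨hl, -⟩
    rw [List.length_eq_zero_iff] at hl
    simp [hl]
  | succ k ih =>
    apply Set.Finite.subset (Set.Finite.image2 List.cons (Set.finite_Iic M) ih)
    rintro l ⟨hl, hb⟩
    cases l with
    | nil => simp at hl
    | cons x xs =>
      refine Set.mem_image2_of_mem ?_ ?_
      · exact hb x (by simp)
      · exact ⟨by simpa using hl, fun y hy => hb y (by simp [hy])⟩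

lemma mem_pref {x : ℕ} {m : ℕ} (h : x ∈ P.pref m) : ∃ i, i < m ∧ x = P.c (i + 1) := by
  rw [pref, List.mem_map] at h
  obtain ⟨i, hi, rfl⟩ := h
  rw [List.mem_range] at hi
  exact ⟨i, hi, rfl⟩

lemma legal_entries_le {l : List ℕ} (hl : P.IsLegal l) {x : ℕ} (hx : x ∈ l) :
    x ≤ (Finset.Icc 1 P.L).sup P.c := by
  induction hl with
  | cond1 m h1 h2 =>
    obtain ⟨i, hi, rfl⟩ := P.mem_pref hx
    exact Finset.le_sup (Finset.mem_Icc.mpr (by omega))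
  | cond2 s hs1 hs2 a ha rest hrest ih =>
    rcases List.mem_append.mp hx with hx1 | hx2
    · obtain ⟨i, hi, rfl⟩ := P.mem_pref hx1
      exact Finset.le_sup (Finset.mem_Icc.mpr (by omega))
    · rcases List.mem_cons.mp hx2 with rfl | hx3
      · calc x ≤ P.c s := le_of_lt ha
          _ ≤ (Finset.Icc 1 P.L).sup P.c := Finset.le_sup (Finset.mem_Icc.mpr (by omega))
      · exact ih hx3
  | cond2_last s hs1 hs2 a ha =>
    rcases List.mem_append.mp hx with hx1 | hx2
    · obtain ⟨i, hi, rfl⟩ := P.mem_pref hx1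
      exact Finset.le_sup (Finset.mem_Icc.mpr (by omega))
    · rw [List.mem_singleton] at hx2
      subst hx2
      calc x ≤ P.c s := le_of_lt ha
        _ ≤ (Finset.Icc 1 P.L).sup P.c := Finset.le_sup (Finset.mem_Icc.mpr (by omega))

lemma Omega_finite (hd : 2 ≤ P.c 1 ∨ 2 ≤ P.L) {n : ℕ} (hn : 1 ≤ n) :
    (P.Omega n).Finite := by
  apply Set.Finite.subset (PLRS.finite_len_bounded n ((Finset.Icc 1 P.L).sup P.c))
  rw [P.Omega_eq hd hn]
  rintro l ⟨hleg, -, hlen⟩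
  exact ⟨hlen, fun x hx => P.legal_entries_le hleg hx⟩

end PLRS
namespace PLRS

variable (P : PLRS)

lemma Z_rear {l : List ℕ} {u : List (List ℕ)} {B C : List ℕ}
    (h : P.blocks l = u ++ [B, C]) : P.Z l = B.sum := by
  unfold Z stlBlock
  rw [h]
  simp

lemma removeSTL_rear {l : List ℕ} {u : List (List ℕ)} {B C : List ℕ}
    (h : P.blocks l = u ++ [B, C]) : P.removeSTL l = (u ++ [C]).flatten := by
  unfold removeSTL
  rw [h]
  have h1 : (u ++ [B, C]).reverse = C :: B :: u.reverse := by simp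
  rw [h1]
  have h2 : (C :: B :: u.reverse).eraseIdx 1 = C :: u.reverse := by simp [List.eraseIdx]
  rw [h2]
  have h3 : (C :: u.reverse).reverse = u ++ [C] := by simp
  rw [h3]

lemma insertSTL_rear {l : List ℕ} {u : List (List ℕ)} {C : List ℕ} (t : ℕ)
    (h : P.blocks l = u ++ [C]) :
    P.insertSTL t l = (u ++ [P.type2Block t, C]).flatten := by
  unfold insertSTL
  rw [h]
  have h1 : (u ++ [C]).reverse = C :: u.reverse := by simp
  rw [h1]
  have h2 : (C :: u.reverse).insertIdx 1 (P.type2Block t) = C :: P.type2Block t :: u.reverse := by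
    simp [List.insertIdx]
  rw [h2]
  have h3 : (C :: P.type2Block t :: u.reverse).reverse = u ++ [P.type2Block t, C] := by simp
  rw [h3]

lemma exists_rear_one {α : Type*} (bs : List α) (h : 1 ≤ bs.length) :
    ∃ u C, bs = u ++ [C] := by
  rcases hr : bs.reverse with _ | ⟨C, r'⟩
  · have h1 : bs.reverse.length = 0 := by rw [hr]; rfl
    rw [List.length_reverse] at h1; omega
  · refine ⟨r'.reverse, C, ?_⟩
    have : bs = (C :: r').reverse := by rw [← hr, List.reverse_reverse]
    rw [this]
    simp

lemma flatten_rear_length (u : List (List ℕ)) (T C : List ℕ) :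
    (u ++ [T, C]).flatten.length = (u ++ [C]).flatten.length + T.length := by
  simp [List.length_flatten]
  omega

lemma flatten_rear_sum (u : List (List ℕ)) (T C : List ℕ) :
    (u ++ [T, C]).flatten.sum = (u ++ [C]).flatten.sum + T.sum := by
  simp [List.sum_flatten]
  omega

/-- The key structure lemma for elements of `Ω_n ∩ {Z = t}`. -/
lemma struct_A (hd : 2 ≤ P.c 1 ∨ 2 ≤ P.L) {n t : ℕ} {l : List ℕ}
    (hn : 2 * P.L < n) (ht : t < P.size) (hl : l ∈ P.Omega n) (hz : P.Z l = t) :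
    ∃ u C, u ≠ [] ∧ P.Chain (u ++ [P.type2Block t, C])
      ∧ P.blocks l = u ++ [P.type2Block t, C]
      ∧ l = (u ++ [P.type2Block t, C]).flatten := by
  rw [P.Omega_eq hd (by omega)] at hl
  obtain ⟨hleg, hhead, hlen⟩ := hl
  obtain ⟨bs, hch, rfl⟩ := P.legal_chain hleg
  have hbl : P.blocks bs.flatten = bs := P.blocks_flatten hch
  have h3 : 3 ≤ bs.length := by
    by_contra h
    push_neg at h
    have h1 := P.chain_flatten_length_le hch
    have h2 : bs.length * P.L ≤ 2 * P.L := by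
      apply Nat.mul_le_mul_right
      omega
    omega
  obtain ⟨u, B, C, rfl⟩ := exists_rear_two bs (by omega)
  have hu : u ≠ [] := by
    intro h
    rw [h] at h3
    simp at h3
  have hBsum : B.sum = t := by rw [← P.Z_rear hbl, hz]
  have hB2 : P.IsType2Block B := P.chain_middle_type2 u B [C] hch (by simp)
  obtain ⟨-, hBeq, -⟩ := P.type2_unique hB2 hBsum
  subst hBeq
  exact ⟨u, C, hu, hch, hbl, rfl⟩

/-- The key structure lemma for elements of `Ω_m`, `m > L`. -/
lemma struct_B (hd : 2 ≤ P.c 1 ∨ 2 ≤ P.L) {m : ℕ} {l : List ℕ}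
    (hm : P.L < m) (hl : l ∈ P.Omega m) :
    ∃ u C, u ≠ [] ∧ P.Chain (u ++ [C]) ∧ P.blocks l = u ++ [C]
      ∧ l = (u ++ [C]).flatten := by
  rw [P.Omega_eq hd (by omega)] at hl
  obtain ⟨hleg, hhead, hlen⟩ := hl
  obtain ⟨bs, hch, rfl⟩ := P.legal_chain hleg
  have hbl : P.blocks bs.flatten = bs := P.blocks_flatten hch
  have h2 : 2 ≤ bs.length := by
    by_contra h
    push_neg at h
    have h1 := P.chain_flatten_length_le hch
    have h2 : bs.length * P.L ≤ 1 * P.L := by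
      apply Nat.mul_le_mul_right
      omega
    omega
  obtain ⟨u, C, rfl⟩ := exists_rear_one bs (by omega)
  have hu : u ≠ [] := by
    intro h
    rw [h] at h2
    simp at h2
  exact ⟨u, C, hu, hch, hbl, rfl⟩

lemma mem_Omega_flatten (hd : 2 ≤ P.c 1 ∨ 2 ≤ P.L) {bs : List (List ℕ)}
    (hch : P.Chain bs) (hhead : 0 < bs.flatten.headI) {n : ℕ} (hn : 1 ≤ n)
    (hlen : bs.flatten.length = n) : bs.flatten ∈ P.Omega n := by
  rw [P.Omega_eq hd hn]
  exact ⟨P.chain_legal hch, hhead, hlen⟩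

theorem main_bij (hd : 2 ≤ P.c 1 ∨ 2 ≤ P.L) {n t : ℕ} (hn : 2 * P.L < n) (ht : t < P.size) :
    Set.BijOn P.removeSTL (P.Omega n ∩ {l | P.Z l = t}) (P.Omega (n - P.ell t)) ∧
    (∀ l ∈ P.Omega n ∩ {l | P.Z l = t}, l.sum = (P.removeSTL l).sum + t) := by
  obtain ⟨he1, he2, he3, he4⟩ := P.ell_spec ht
  have hT2 : P.IsType2Block (P.type2Block t) := P.type2Block_isType2 ht
  have hTsum : (P.type2Block t).sum = t := P.type2Block_sum ht
  have hTlen : (P.type2Block t).length = P.ell t := P.type2Block_length ht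
  have hmL : P.L < n - P.ell t := by omega
  have hfwd : ∀ l ∈ P.Omega n ∩ {l | P.Z l = t},
      P.removeSTL l ∈ P.Omega (n - P.ell t) ∧ l.sum = (P.removeSTL l).sum + t ∧
        P.insertSTL t (P.removeSTL l) = l := by
    rintro l ⟨hl, hz⟩
    obtain ⟨u, C, hu, hch, hbl, hflat⟩ := P.struct_A hd hn ht hl hz
    obtain ⟨b, u₀, rfl⟩ : ∃ b u₀, u = b :: u₀ := by
      cases u with
      | nil => exact absurd rfl hu
      | cons b u₀ => exact ⟨b, u₀, rfl⟩
    have hb : b ≠ [] := by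
      have h1 := P.chain_block_len hch (show b ∈ (b :: u₀) ++ [P.type2Block t, C] by simp)
      intro hbe
      rw [hbe] at h1
      simp at h1
    have hrem : P.removeSTL l = ((b :: u₀) ++ [C]).flatten := P.removeSTL_rear hbl
    have hch' : P.Chain ((b :: u₀) ++ [C]) := P.chain_erase _ _ C hch
    have hheadl : 0 < l.headI := by
      rw [P.Omega_eq hd (by omega)] at hl
      exact hl.2.1
    have hheadeq : (((b :: u₀) ++ [C]).flatten).headI = l.headI := by
      rw [hflat, show (b :: u₀) ++ [P.type2Block t, C] = b :: (u₀ ++ [P.type2Block t, C])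
        from rfl, show (b :: u₀) ++ [C] = b :: (u₀ ++ [C]) from rfl,
        PLRS.headI_flatten_cons _ _ hb, PLRS.headI_flatten_cons _ _ hb]
    have hlenl : l.length = n := by
      rw [P.Omega_eq hd (by omega)] at hl
      exact hl.2.2
    have hlenrem : ((b :: u₀) ++ [C]).flatten.length = n - P.ell t := by
      have h1 := PLRS.flatten_rear_length (b :: u₀) (P.type2Block t) C
      rw [← hflat, hlenl, hTlen] at h1
      omega
    have hsum : l.sum = ((b :: u₀) ++ [C]).flatten.sum + t := by
      have h1 := PLRS.flatten_rear_sum (b :: u₀) (P.type2Block t) C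
      rw [← hflat, hTsum] at h1
      exact h1
    refine ⟨?_, ?_, ?_⟩
    · rw [hrem]
      exact P.mem_Omega_flatten hd hch' (by rw [hheadeq]; exact hheadl) (by omega) hlenrem
    · rw [hrem]
      exact hsum
    · have hbl' : P.blocks ((b :: u₀) ++ [C]).flatten = (b :: u₀) ++ [C] :=
        P.blocks_flatten hch'
      rw [hrem, P.insertSTL_rear t hbl', ← hflat]
  have hbwd : ∀ l' ∈ P.Omega (n - P.ell t),
      P.insertSTL t l' ∈ P.Omega n ∩ {l | P.Z l = t} ∧
        P.removeSTL (P.insertSTL t l') = l' := by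
    intro l' hl'
    obtain ⟨u, C, hu, hch, hbl, hflat⟩ := P.struct_B hd hmL hl'
    obtain ⟨b, u₀, rfl⟩ : ∃ b u₀, u = b :: u₀ := by
      cases u with
      | nil => exact absurd rfl hu
      | cons b u₀ => exact ⟨b, u₀, rfl⟩
    have hb : b ≠ [] := by
      have h1 := P.chain_block_len hch (show b ∈ (b :: u₀) ++ [C] by simp)
      intro hbe
      rw [hbe] at h1
      simp at h1
    have hins : P.insertSTL t l' = ((b :: u₀) ++ [P.type2Block t, C]).flatten :=
      P.insertSTL_rear t hbl
    have hch' : P.Chain ((b :: u₀) ++ [P.type2Block t, C]) :=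
      P.chain_insert _ _ C hT2 hch
    have hheadl : 0 < l'.headI := by
      rw [P.Omega_eq hd (by omega)] at hl'
      exact hl'.2.1
    have hlenl : l'.length = n - P.ell t := by
      rw [P.Omega_eq hd (by omega)] at hl'
      exact hl'.2.2
    have hheadeq : (((b :: u₀) ++ [P.type2Block t, C]).flatten).headI = l'.headI := by
      rw [hflat, show (b :: u₀) ++ [P.type2Block t, C] = b :: (u₀ ++ [P.type2Block t, C])
        from rfl, show (b :: u₀) ++ [C] = b :: (u₀ ++ [C]) from rfl,
        PLRS.headI_flatten_cons _ _ hb, PLRS.headI_flatten_cons _ _ hb]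
    have hlenins : ((b :: u₀) ++ [P.type2Block t, C]).flatten.length = n := by
      have h1 := PLRS.flatten_rear_length (b :: u₀) (P.type2Block t) C
      rw [← hflat, hlenl, hTlen] at h1
      omega
    have hbl' : P.blocks ((b :: u₀) ++ [P.type2Block t, C]).flatten
        = (b :: u₀) ++ [P.type2Block t, C] := P.blocks_flatten hch'
    refine ⟨⟨?_, ?_⟩, ?_⟩
    · rw [hins]
      exact P.mem_Omega_flatten hd hch' (by rw [hheadeq]; exact hheadl) (by omega) hlenins
    · show P.Z (P.insertSTL t l') = t
      rw [hins] at *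
      rw [P.Z_rear hbl', hTsum]
    · rw [hins, P.removeSTL_rear hbl', ← hflat]
  constructor
  · refine ⟨fun l hl => (hfwd l hl).1, ?_, ?_⟩
    · intro l1 h1 l2 h2 heq
      have e1 := (hfwd l1 h1).2.2
      have e2 := (hfwd l2 h2).2.2
      rw [← e1, ← e2, heq]
    · intro l' hl'
      exact ⟨P.insertSTL t l', (hbwd l' hl').1, (hbwd l' hl').2⟩
  · exact fun l hl => (hfwd l hl).2.1

end PLRS
namespace PLRS

variable (P : PLRS)

lemma expect_shift (hd : 2 ≤ P.c 1 ∨ 2 ≤ P.L) {n t : ℕ} (hn : 2 * P.L < n)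
    (ht : t < P.size) :
    P.condExpect n t (fun l => (l.sum : ℝ)) = P.expectK (n - P.ell t) + t := by
  obtain ⟨he1, he2, he3, he4⟩ := P.ell_spec ht
  obtain ⟨hbij, hsum⟩ := P.main_bij hd hn ht
  set A := P.Omega n ∩ {l | P.Z l = t} with hA
  set B := P.Omega (n - P.ell t) with hB
  have hmL : P.L < n - P.ell t := by omega
  have hBfin : B.Finite := P.Omega_finite hd (by omega)
  have hAfin : A.Finite := Set.Finite.subset (P.Omega_finite hd (by omega))
    Set.inter_subset_left
  have hBne : B.Nonempty := P.Omega_nonempty hd hmL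
  have hcard : A.ncard = B.ncard := by
    rw [← hbij.image_eq]
    exact (Set.ncard_image_of_injOn hbij.injOn).symm
  have hconst : ∑ᶠ l ∈ B, (t : ℝ) = (B.ncard : ℝ) * t := by
    have h1 : ∑ᶠ l ∈ (↑hBfin.toFinset : Set (List ℕ)), (t : ℝ)
        = (hBfin.toFinset.card : ℕ) • (t : ℝ) := by
      rw [finsum_mem_coe_finset, Finset.sum_const]
    rw [Set.Finite.coe_toFinset] at h1
    rw [h1, nsmul_eq_mul, Set.ncard_eq_toFinset_card B hBfin]
  have hsum1 : ∑ᶠ l ∈ A, ((l.sum : ℕ) : ℝ)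
      = (∑ᶠ l ∈ B, ((l.sum : ℕ) : ℝ)) + (B.ncard : ℝ) * t := by
    rw [finsum_mem_eq_of_bijOn (f := fun l => ((l.sum : ℕ) : ℝ))
      (g := fun y => ((y.sum : ℕ) : ℝ) + (t : ℝ)) P.removeSTL hbij ?_]
    · rw [finsum_mem_add_distrib hBfin, hconst]
    · intro x hx
      have := hsum x hx
      push_cast [this]
      ring
  have hc0 : (B.ncard : ℝ) ≠ 0 := by
    have h1 : 0 < B.ncard := (Set.ncard_pos hBfin).mpr hBne
    exact_mod_cast Nat.pos_iff_ne_zero.mp h1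
  show expectOn A _ = expectOn B _ + (t : ℝ)
  unfold expectOn
  rw [hsum1, hcard]
  field_simp

lemma H_deg (hL : P.L = 1) (hc1 : P.c 1 = 1) {r : ℕ} (hr : 1 ≤ r) : P.H r = 1 := by
  induction r with
  | zero => omega
  | succ k ih =>
    rcases Nat.eq_zero_or_pos k with rfl | hk
    · exact P.H_one
    · rw [P.H_rec k (by omega), hL]
      simp [hc1, ih hk]

lemma Omega_deg (hL : P.L = 1) (hc1 : P.c 1 = 1) {r : ℕ} (hr : 1 ≤ r) :
    P.Omega r = ∅ := by
  ext l
  simp only [Omega, Set.mem_setOf_eq, Set.mem_empty_iff_false, iff_false]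
  rintro ⟨-, hlow, hhigh⟩
  rw [P.H_deg hL hc1 hr, P.H_deg hL hc1 (by omega)] at *
  omega

lemma expectK_deg (hL : P.L = 1) (hc1 : P.c 1 = 1) {r : ℕ} (hr : 1 ≤ r) :
    P.expectK r = 0 := by
  unfold expectK expect expectOn
  rw [P.Omega_deg hL hc1 hr]
  simp

end PLRS
/-- If `E[K_r] = a·r + b + f r` for `r > L`, then for `n > 2L`, `0 ≤ t < S`:
`E[K_n | Z_n = t] = a(n - ℓ(t)) + b + f(n - ℓ(t)) + t`. -/
theorem condExpectK_eq (P : PLRS) (a b : ℝ) (f : ℕ → ℝ)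
    (hf : ∀ r : ℕ, P.L < r → P.expectK r = a * (r : ℝ) + b + f r)
    (n t : ℕ) (hn : 2 * P.L < n) (ht : t < P.size) :
    P.condExpect n t (fun l => (l.sum : ℝ)) =
      a * ((n : ℝ) - (P.ell t : ℝ)) + b + f (n - P.ell t) + (t : ℝ) := by
  by_cases hdeg : P.L = 1 ∧ P.c 1 = 1
  · -- degenerate: H is constant 1 and all Ω are empty
    obtain ⟨hL, hc1⟩ := hdeg
    have hsize : P.size = 1 := by
      unfold size
      rw [hL]
      simp [hc1]
    have ht0 : t = 0 := by omega
    subst ht0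
    have hell : P.ell 0 = 1 := by
      apply P.ell_eq le_rfl
      · simp [psum]
      · rw [show P.psum 1 = P.c 1 from by simp [psum], hc1]
        omega
    have hLHS : P.condExpect n 0 (fun l => (l.sum : ℝ)) = 0 := by
      unfold condExpect expectOn
      rw [P.Omega_deg hL hc1 (by omega), Set.empty_inter]
      simp
    have hK := P.expectK_deg hL hc1 (show 1 ≤ n - 1 by omega)
    have hfr := hf (n - 1) (by omega)
    rw [hK] at hfr
    rw [hLHS, hell]
    have hc : ((n - 1 : ℕ) : ℝ) = (n : ℝ) - 1 := by
      push_cast [Nat.cast_sub (show 1 ≤ n by omega)]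
      ring
    rw [hc] at hfr
    push_cast
    linarith [hfr]
  · have hd : 2 ≤ P.c 1 ∨ 2 ≤ P.L := by
      have h1 := P.c1_pos
      have h2 := P.L_pos
      rcases Nat.lt_or_ge (P.c 1) 2 with h | h
      · rcases Nat.lt_or_ge P.L 2 with h' | h'
        · exact absurd ⟨by omega, by omega⟩ hdeg
        · exact Or.inr h'
      · exact Or.inl h
    obtain ⟨he1, he2, he3, he4⟩ := P.ell_spec ht
    rw [P.expect_shift hd hn ht, hf (n - P.ell t) (by omega)]
    have hc : ((n - P.ell t : ℕ) : ℝ) = (n : ℝ) - (P.ell t : ℝ) :=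
      Nat.cast_sub (by omega)
    rw [hc]
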